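/- Let Φ(σ, θ) ∈ ℝ^{L_{k+1}} denote the DNN output as a function of the input σ ∈ ℝ^{L_0 - 1} (with augmented input σ_a = (σ, 1)) and of the full weight tuple θ = (V_0, …, V_k) ∈ ∏_{j=0}^{k} ℝ^{L_j × L_{j+1}}, the weight space carrying the supremum over blocks of the spectral norms. Suppose each φ_j is twice continuously differentiable with ‖φ_j(y)‖ ≤ 𝔞₁‖y‖ + 𝔞₀, ‖φ'_j(y)‖ ≤ 𝔟₀, and ‖φ''_j(y)‖ ≤ 𝔠₀ for all y. Let Θ be a convex subset of the weight space such that ‖θ‖ ≤ θ̄ for all θ ∈ Θ. Then there exist constants a₂, a₁, a₀ > 0 such that for every input σ and every pair θ*, θ̂ ∈ Θ, with θ̃ := θ* − θ̂, the first-order Taylor remainder satisfies ‖Φ(σ, θ*) − Φ(σ, θ̂) − D_θΦ(σ, θ̂)[θ̃]‖ ≤ ( a₂‖σ‖² + a₁‖σ‖ + a₀ ) ‖θ̃‖², where D_θΦ(σ, θ̂) is the Fréchet derivative of θ ↦ Φ(σ, θ) at θ̂. -/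

import Mathlib

open scoped Matrix Matrix.Norms.L2Operator

/-- The linear map `x ↦ Aᵀ x` on Euclidean spaces, i.e. the action of the (transposed)
weight matrix `A` as in `Φⱼ = Vⱼᵀ φⱼ(Φⱼ₋₁)`. Its operator norm equals the spectral norm of `A`. -/
noncomputable def matCLM {a b : ℕ} (A : Matrix (Fin a) (Fin b) ℝ) :
    EuclideanSpace ℝ (Fin a) →L[ℝ] EuclideanSpace ℝ (Fin b) :=
  LinearMap.toContinuousLinearMap (Matrix.toEuclideanLin Aᵀ)

/-- The layer outputs of a fully-connected feedforward DNN: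
`Φ₀ = V₀ᵀ σₐ` and `Φⱼ = Vⱼᵀ φⱼ(Φⱼ₋₁)`. -/
noncomputable def dnnPhi (L : ℕ → ℕ)
    (V : (j : ℕ) → Matrix (Fin (L j)) (Fin (L (j+1))) ℝ)
    (σa : EuclideanSpace ℝ (Fin (L 0)))
    (φ : (j : ℕ) → EuclideanSpace ℝ (Fin (L j)) → EuclideanSpace ℝ (Fin (L j))) :
    (j : ℕ) → EuclideanSpace ℝ (Fin (L (j+1)))
  | 0 => matCLM (V 0) σa
  | (j+1) => matCLM (V (j+1)) (φ (j+1) (dnnPhi L V σa φ j))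

/-- Extends a tuple of weight matrices `(V₀, …, V_k)` to a function on all of `ℕ` (by zero),
so that it can be fed to `dnnPhi`. -/
noncomputable def extendW (k : ℕ) (L : ℕ → ℕ)
    (Vt : (j : Fin (k+1)) → Matrix (Fin (L j)) (Fin (L (j+1))) ℝ) :
    (j : ℕ) → Matrix (Fin (L j)) (Fin (L (j+1))) ℝ :=
  fun j => if h : j < k + 1 then Vt ⟨j, h⟩ else 0

/-- The augmented input `σₐ = (σ, 1) ∈ ℝ^{L₀}`: the first `m` coordinates are those of `σ`
and the remaining coordinates equal `1` (used with `L₀ = m + 1`). -/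
noncomputable def augInput (L0 m : ℕ) (σ : EuclideanSpace ℝ (Fin m)) :
    EuclideanSpace ℝ (Fin L0) :=
  (EuclideanSpace.equiv (Fin L0) ℝ).symm
    (fun i => if h : (i : ℕ) < m then σ ⟨i, h⟩ else 1)

/-! ### Auxiliary material -/

lemma matCLM_apply_norm {a b : ℕ} (A : Matrix (Fin a) (Fin b) ℝ)
    (x : EuclideanSpace ℝ (Fin a)) : ‖matCLM A x‖ ≤ ‖A‖ * ‖x‖ := by
  have h1 : ‖matCLM A x‖ ≤ ‖Aᵀ‖ * ‖x‖ := by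
    exact
      ((Matrix.toEuclideanLin (𝕜 := ℝ) (m := Fin b) (n := Fin a)).trans
        LinearMap.toContinuousLinearMap Aᵀ).le_opNorm x
  have h2 : ‖Aᵀ‖ = ‖A‖ := by
    rw [← Matrix.conjTranspose_eq_transpose_of_trivial, Matrix.l2_opNorm_conjTranspose]
  rw [h2] at h1; exact h1

/-- The map `A ↦ matCLM A` as a continuous linear map. -/
noncomputable def matCLM₂ {a b : ℕ} :
    Matrix (Fin a) (Fin b) ℝ →L[ℝ] (EuclideanSpace ℝ (Fin a) →L[ℝ] EuclideanSpace ℝ (Fin b)) :=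
  LinearMap.toContinuousLinearMap
  { toFun := matCLM
    map_add' := by intro A B; ext x i; simp [matCLM, Matrix.transpose_add]
    map_smul' := by intro c A; ext x i; simp [matCLM, Matrix.transpose_smul] }

@[simp] lemma matCLM₂_apply {a b : ℕ} (A : Matrix (Fin a) (Fin b) ℝ) :
    matCLM₂ A = matCLM A := rfl

lemma matCLM_sub {a b : ℕ} (A B : Matrix (Fin a) (Fin b) ℝ) :
    matCLM (A - B) = matCLM A - matCLM B := by
  rw [← matCLM₂_apply, ← matCLM₂_apply, ← matCLM₂_apply, map_sub]

/-- The candidate Fréchet derivative of `θ ↦ Φⱼ(σ, θ)`. -/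
noncomputable def Dmap (k : ℕ) (L : ℕ → ℕ)
    (φ : (j : ℕ) → EuclideanSpace ℝ (Fin (L j)) → EuclideanSpace ℝ (Fin (L j)))
    (σa : EuclideanSpace ℝ (Fin (L 0)))
    (θ : (i : Fin (k+1)) → Matrix (Fin (L i)) (Fin (L (i+1))) ℝ) :
    (j : ℕ) → (((i : Fin (k+1)) → Matrix (Fin (L i)) (Fin (L (i+1))) ℝ) →L[ℝ]
      EuclideanSpace ℝ (Fin (L (j+1))))
  | 0 => (matCLM₂.flip σa).comp (ContinuousLinearMap.proj (⟨0, Nat.succ_pos k⟩ : Fin (k+1)))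
  | (j+1) =>
    if h : j + 1 < k + 1 then
      (matCLM₂.flip (φ (j+1) (dnnPhi L (extendW k L θ) σa φ j))).comp
        (ContinuousLinearMap.proj (⟨j+1, h⟩ : Fin (k+1)))
      + (matCLM (θ ⟨j+1, h⟩)).comp
        ((fderiv ℝ (φ (j+1)) (dnnPhi L (extendW k L θ) σa φ j)).comp (Dmap k L φ σa θ j))
    else 0

lemma extendW_lt {k : ℕ} {L : ℕ → ℕ}
    (θ : (j : Fin (k+1)) → Matrix (Fin (L j)) (Fin (L (j+1))) ℝ)
    {j : ℕ} (h : j < k + 1) : extendW k L θ j = θ ⟨j, h⟩ := dif_pos h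

lemma Dmap_zero_apply {k : ℕ} {L : ℕ → ℕ}
    {φ : (j : ℕ) → EuclideanSpace ℝ (Fin (L j)) → EuclideanSpace ℝ (Fin (L j))}
    {σa : EuclideanSpace ℝ (Fin (L 0))}
    (θ h : (i : Fin (k+1)) → Matrix (Fin (L i)) (Fin (L (i+1))) ℝ) :
    Dmap k L φ σa θ 0 h = matCLM (h ⟨0, Nat.succ_pos k⟩) σa := rfl

lemma Dmap_succ_apply {k : ℕ} {L : ℕ → ℕ}
    {φ : (j : ℕ) → EuclideanSpace ℝ (Fin (L j)) → EuclideanSpace ℝ (Fin (L j))}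
    {σa : EuclideanSpace ℝ (Fin (L 0))}
    (θ h : (i : Fin (k+1)) → Matrix (Fin (L i)) (Fin (L (i+1))) ℝ)
    {j : ℕ} (hjk : j + 1 < k + 1) :
    Dmap k L φ σa θ (j+1) h
      = matCLM (h ⟨j+1, hjk⟩) (φ (j+1) (dnnPhi L (extendW k L θ) σa φ j))
        + matCLM (θ ⟨j+1, hjk⟩) ((fderiv ℝ (φ (j+1)) (dnnPhi L (extendW k L θ) σa φ j))
            (Dmap k L φ σa θ j h)) := by
  rw [Dmap, dif_pos hjk]
  simp [ContinuousLinearMap.comp_apply]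

lemma hasFDerivAt_dnnPhi_zero (k : ℕ) (L : ℕ → ℕ)
    (φ : (j : ℕ) → EuclideanSpace ℝ (Fin (L j)) → EuclideanSpace ℝ (Fin (L j)))
    (σa : EuclideanSpace ℝ (Fin (L 0)))
    (θ : (i : Fin (k+1)) → Matrix (Fin (L i)) (Fin (L (i+1))) ℝ) :
    HasFDerivAt (fun θ' => dnnPhi L (extendW k L θ') σa φ 0) (Dmap k L φ σa θ 0) θ := by
  have : (fun θ' : (i : Fin (k+1)) → Matrix (Fin (L i)) (Fin (L (i+1))) ℝ =>
      dnnPhi L (extendW k L θ') σa φ 0) = fun θ' => (Dmap k L φ σa θ 0) θ' := by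
    funext θ'
    simp [dnnPhi, Dmap, extendW, Fin.mk_zero]; rfl
  rw [this]
  exact (Dmap k L φ σa θ 0).hasFDerivAt

lemma hasFDerivAt_dnnPhi_succ (k : ℕ) (L : ℕ → ℕ)
    (φ : (j : ℕ) → EuclideanSpace ℝ (Fin (L j)) → EuclideanSpace ℝ (Fin (L j)))
    (σa : EuclideanSpace ℝ (Fin (L 0)))
    (θ : (i : Fin (k+1)) → Matrix (Fin (L i)) (Fin (L (i+1))) ℝ)
    (j : ℕ) (hjk : j + 1 < k + 1)
    (hd : Differentiable ℝ (φ (j+1)))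
    (IH : HasFDerivAt (fun θ' => dnnPhi L (extendW k L θ') σa φ j) (Dmap k L φ σa θ j) θ) :
    HasFDerivAt (fun θ' => dnnPhi L (extendW k L θ') σa φ (j+1)) (Dmap k L φ σa θ (j+1)) θ := by
  have hu : HasFDerivAt (fun θ' => φ (j+1) (dnnPhi L (extendW k L θ') σa φ j))
      ((fderiv ℝ (φ (j+1)) (dnnPhi L (extendW k L θ) σa φ j)).comp (Dmap k L φ σa θ j)) θ :=
    (hd _).hasFDerivAt.comp θ IH
  set Pc : (((i : Fin (k+1)) → Matrix (Fin (L i)) (Fin (L (i+1))) ℝ) →L[ℝ]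
      Matrix (Fin (L (j+1))) (Fin (L (j+2))) ℝ) :=
    ContinuousLinearMap.proj (⟨j+1, hjk⟩ : Fin (k+1)) with hPc
  have hc := (matCLM₂.comp Pc).hasFDerivAt (x := θ)
  have h2 := hc.clm_apply hu
  have hfun : (fun θ' => dnnPhi L (extendW k L θ') σa φ (j+1))
      = (fun θ' => (matCLM₂.comp Pc) θ' (φ (j+1) (dnnPhi L (extendW k L θ') σa φ j))) := by
    funext θ'
    show dnnPhi L (extendW k L θ') σa φ (j+1) = _
    have he : extendW k L θ' (j+1) = θ' ⟨j+1, hjk⟩ := by simp [extendW, hjk]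
    simp only [dnnPhi, he, ContinuousLinearMap.coe_comp', Function.comp_apply, hPc,
      ContinuousLinearMap.proj_apply, matCLM₂_apply]
  have hder : Dmap k L φ σa θ (j+1)
      = ((matCLM₂.comp Pc) θ).comp
          ((fderiv ℝ (φ (j+1)) (dnnPhi L (extendW k L θ) σa φ j)).comp (Dmap k L φ σa θ j))
        + (matCLM₂.comp Pc).flip (φ (j+1) (dnnPhi L (extendW k L θ) σa φ j)) := by
    ext h
    simp only [Dmap, dif_pos hjk, ContinuousLinearMap.add_apply, ContinuousLinearMap.comp_apply,
      ContinuousLinearMap.flip_apply, hPc, ContinuousLinearMap.proj_apply, matCLM₂_apply]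
    simp only [add_comm]
  rw [hfun, hder]
  exact h2

lemma augInput_apply (L0 m : ℕ) (σ : EuclideanSpace ℝ (Fin m)) (i : Fin L0) :
    augInput L0 m σ i = if h : (i : ℕ) < m then σ ⟨i, h⟩ else 1 := rfl

lemma augInput_norm_le (L0 m : ℕ) (h : L0 = m + 1) (σ : EuclideanSpace ℝ (Fin m)) :
    ‖augInput L0 m σ‖ ≤ ‖σ‖ + 1 := by
  subst h
  have hsq : ‖augInput (m+1) m σ‖ ^ 2 = ‖σ‖ ^ 2 + 1 := by
    rw [EuclideanSpace.norm_eq, EuclideanSpace.norm_eq,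
      Real.sq_sqrt (by positivity), Real.sq_sqrt (by positivity)]
    simp only [augInput_apply]
    rw [Fin.sum_univ_castSucc]
    simp [Fin.is_lt]
  nlinarith [norm_nonneg (augInput (m+1) m σ), norm_nonneg σ]


lemma dnn_arith1 {t A C' s : ℝ} (h : t * A ≤ C') (hs : 0 ≤ s) :
    t * (A * (s + 1)) ≤ C' * (s + 1) := by
  nlinarith [mul_le_mul_of_nonneg_right h (by linarith : (0:ℝ) ≤ s + 1)]

lemma dnn_arith2 {x t b c C' s nh : ℝ} (h : x + t * b * c ≤ C') (hs : 0 ≤ s) (hnh : 0 ≤ nh) :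
    x * (s + 1) * nh + t * (b * (c * (s + 1) * nh)) ≤ C' * (s + 1) * nh := by
  have h1 : (0:ℝ) ≤ (s + 1) * nh := mul_nonneg (by linarith) hnh
  nlinarith [mul_le_mul_of_nonneg_right h h1]

lemma dnn_arith3 {b c t C Cp s d nh : ℝ} (hb : 0 ≤ b) (hc : 0 ≤ c) (ht : 0 ≤ t) (hC : 0 ≤ C)
    (hp : 2 * b * C + t * c * C ^ 2 + t * b * C ≤ Cp)
    (hs : 0 ≤ s) (hd : 0 ≤ d) (hnh : 0 ≤ nh) :
    nh * (b * (C * (s + 1) * d)) + d * (b * (C * (s + 1) * nh))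
      + (t * ((c * (C * (s + 1) * d)) * (C * (s + 1) * nh))
        + t * (b * (C * (s + 1) ^ 2 * d * nh))) ≤ Cp * (s + 1) ^ 2 * d * nh := by
  have h1 : (0:ℝ) ≤ d * nh := mul_nonneg hd hnh
  have hsq : s + 1 ≤ (s + 1) ^ 2 := by nlinarith
  have h2bC : (0:ℝ) ≤ 2 * b * C := mul_nonneg (mul_nonneg (by norm_num) hb) hC
  have e2 : 2 * b * C * ((s + 1) * (d * nh)) ≤ 2 * b * C * ((s + 1) ^ 2 * (d * nh)) :=
    mul_le_mul_of_nonneg_left (mul_le_mul_of_nonneg_right hsq h1) h2bC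
  have e3 : (0:ℝ) ≤ (s + 1) ^ 2 * (d * nh) := mul_nonneg (sq_nonneg _) h1
  calc nh * (b * (C * (s + 1) * d)) + d * (b * (C * (s + 1) * nh))
      + (t * ((c * (C * (s + 1) * d)) * (C * (s + 1) * nh))
        + t * (b * (C * (s + 1) ^ 2 * d * nh)))
      = 2 * b * C * ((s + 1) * (d * nh))
        + (t * c * C ^ 2 + t * b * C) * ((s + 1) ^ 2 * (d * nh)) := by ring
    _ ≤ 2 * b * C * ((s + 1) ^ 2 * (d * nh))
        + (t * c * C ^ 2 + t * b * C) * ((s + 1) ^ 2 * (d * nh)) := add_le_add_left e2 _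
    _ = (2 * b * C + t * c * C ^ 2 + t * b * C) * ((s + 1) ^ 2 * (d * nh)) := by ring
    _ ≤ Cp * ((s + 1) ^ 2 * (d * nh)) := mul_le_mul_of_nonneg_right hp e3
    _ = Cp * (s + 1) ^ 2 * d * nh := by ring

lemma dnn_arith4 {C sa t d : ℝ} (hC : 0 ≤ C) (hsa : 0 ≤ sa) (ht : 0 ≤ t) (hd : 0 ≤ d)
    (h : sa ≤ t + 1) :
    C * (sa + 1) ^ 2 * d * d ≤ (C * t ^ 2 + 4 * C * t + 4 * C) * d ^ 2 := by
  have h2 : (sa + 1) ^ 2 ≤ (t + 2) ^ 2 := by nlinarith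
  calc C * (sa + 1) ^ 2 * d * d = C * (sa + 1) ^ 2 * d ^ 2 := by ring
    _ ≤ C * (t + 2) ^ 2 * d ^ 2 :=
        mul_le_mul_of_nonneg_right (mul_le_mul_of_nonneg_left h2 hC) (sq_nonneg d)
    _ = (C * t ^ 2 + 4 * C * t + 4 * C) * d ^ 2 := by ring

set_option maxHeartbeats 1000000 in
theorem dnn_taylor_remainder_quadratic_bound
    (k : ℕ) (hk : 1 ≤ k) (L : ℕ → ℕ) (m : ℕ) (hL0 : L 0 = m + 1)
    (φ : (j : ℕ) → EuclideanSpace ℝ (Fin (L j)) → EuclideanSpace ℝ (Fin (L j)))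
    (𝔞₀ 𝔞₁ 𝔟₀ 𝔠₀ θbar : ℝ)
    (ha0 : 0 < 𝔞₀) (ha1 : 0 ≤ 𝔞₁) (hb0 : 0 < 𝔟₀) (hc0 : 0 < 𝔠₀) (hθ : 0 < θbar)
    (hφsmooth : ∀ l, 1 ≤ l → l ≤ k → ContDiff ℝ 2 (φ l))
    (hφ : ∀ l, 1 ≤ l → l ≤ k → ∀ y, ‖φ l y‖ ≤ 𝔞₁ * ‖y‖ + 𝔞₀)
    (hφ' : ∀ l, 1 ≤ l → l ≤ k → ∀ y, ‖fderiv ℝ (φ l) y‖ ≤ 𝔟₀)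
    (hφ'' : ∀ l, 1 ≤ l → l ≤ k → ∀ y, ‖fderiv ℝ (fderiv ℝ (φ l)) y‖ ≤ 𝔠₀)
    (Θ : Set ((i : Fin (k+1)) → Matrix (Fin (L i)) (Fin (L (i+1))) ℝ))
    (hΘconv : Convex ℝ Θ) (hΘbdd : ∀ θ ∈ Θ, ‖θ‖ ≤ θbar) :
    ∃ a₂ a₁ a₀ : ℝ, 0 < a₂ ∧ 0 < a₁ ∧ 0 < a₀ ∧
      ∀ (σ : EuclideanSpace ℝ (Fin m)), ∀ θstar ∈ Θ, ∀ θhat ∈ Θ,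
        ‖dnnPhi L (extendW k L θstar) (augInput (L 0) m σ) φ k
            - dnnPhi L (extendW k L θhat) (augInput (L 0) m σ) φ k
            - fderiv ℝ (fun Wt => dnnPhi L (extendW k L Wt) (augInput (L 0) m σ) φ k) θhat
                (θstar - θhat)‖ ≤
          (a₂ * ‖σ‖ ^ 2 + a₁ * ‖σ‖ + a₀) * ‖θstar - θhat‖ ^ 2 := by
  classical
  have hφdiff : ∀ l, 1 ≤ l → l ≤ k → Differentiable ℝ (φ l) := fun l h1 h2 =>
    (hφsmooth l h1 h2).differentiable (by norm_num)
  have hφlip : ∀ l, 1 ≤ l → l ≤ k → ∀ y y', ‖φ l y - φ l y'‖ ≤ 𝔟₀ * ‖y - y'‖ := by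
    intro l h1 h2 y y'
    exact Convex.norm_image_sub_le_of_norm_fderiv_le
      (fun x _ => (hφdiff l h1 h2).differentiableAt)
      (fun x _ => hφ' l h1 h2 x) convex_univ (Set.mem_univ y') (Set.mem_univ y)
  have hφ'lip : ∀ l, 1 ≤ l → l ≤ k → ∀ y y',
      ‖fderiv ℝ (φ l) y - fderiv ℝ (φ l) y'‖ ≤ 𝔠₀ * ‖y - y'‖ := by
    intro l h1 h2 y y'
    exact Convex.norm_image_sub_le_of_norm_fderiv_le
      (fun x _ => (((hφsmooth l h1 h2).fderiv_right (m := 1)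
        (by norm_num)).differentiable (by norm_num)).differentiableAt)
      (fun x _ => hφ'' l h1 h2 x) convex_univ (Set.mem_univ y') (Set.mem_univ y)
  -- the main induction on layers
  have key : ∀ j, j ≤ k → ∃ C : ℝ, 0 < C ∧
      ∀ (σa : EuclideanSpace ℝ (Fin (L 0)))
        (θ : (i : Fin (k+1)) → Matrix (Fin (L i)) (Fin (L (i+1))) ℝ), ‖θ‖ ≤ θbar →
        HasFDerivAt (fun θ' => dnnPhi L (extendW k L θ') σa φ j) (Dmap k L φ σa θ j) θ ∧
        ‖dnnPhi L (extendW k L θ) σa φ j‖ ≤ C * (‖σa‖ + 1) ∧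
        ‖Dmap k L φ σa θ j‖ ≤ C * (‖σa‖ + 1) ∧
        ∀ θ' : (i : Fin (k+1)) → Matrix (Fin (L i)) (Fin (L (i+1))) ℝ, ‖θ'‖ ≤ θbar →
          ‖Dmap k L φ σa θ j - Dmap k L φ σa θ' j‖ ≤ C * (‖σa‖ + 1) ^ 2 * ‖θ - θ'‖ := by
    intro j
    induction j with
    | zero =>
      intro _
      refine ⟨max θbar 1, lt_max_of_lt_right one_pos, fun σa θ hθb => ?_⟩
      have hs0 : (0:ℝ) ≤ ‖σa‖ := norm_nonneg _
      have hθbar1 : θbar ≤ max θbar 1 := le_max_left _ _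
      have h11 : (1:ℝ) ≤ max θbar 1 := le_max_right _ _
      have hbσ : ‖σa‖ ≤ max θbar 1 * (‖σa‖ + 1) := by
        nlinarith [mul_nonneg (sub_nonneg.2 h11) hs0]
      refine ⟨hasFDerivAt_dnnPhi_zero k L φ σa θ, ?_, ?_, ?_⟩
      · show ‖matCLM (extendW k L θ 0) σa‖ ≤ _
        rw [extendW_lt θ (Nat.succ_pos k)]
        calc ‖matCLM (θ ⟨0, Nat.succ_pos k⟩) σa‖ ≤ ‖θ ⟨0, Nat.succ_pos k⟩‖ * ‖σa‖ :=
              matCLM_apply_norm _ _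
          _ ≤ θbar * ‖σa‖ :=
              mul_le_mul_of_nonneg_right ((norm_le_pi_norm θ _).trans hθb) hs0
          _ ≤ max θbar 1 * (‖σa‖ + 1) := by
              nlinarith [mul_nonneg (sub_nonneg.2 hθbar1) hs0]
      · refine ContinuousLinearMap.opNorm_le_bound _ (by positivity) fun h => ?_
        have h1 : ‖Dmap k L φ σa θ 0 h‖ ≤ ‖σa‖ * ‖h‖ := by
          rw [Dmap_zero_apply]
          calc ‖matCLM (h ⟨0, Nat.succ_pos k⟩) σa‖ ≤ ‖h ⟨0, Nat.succ_pos k⟩‖ * ‖σa‖ :=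
                matCLM_apply_norm _ _
            _ ≤ ‖h‖ * ‖σa‖ := mul_le_mul_of_nonneg_right (norm_le_pi_norm h _) hs0
            _ = ‖σa‖ * ‖h‖ := mul_comm _ _
        exact h1.trans (mul_le_mul_of_nonneg_right hbσ (norm_nonneg h))
      · intro θ' _
        refine ContinuousLinearMap.opNorm_le_bound _ (by positivity) fun h => ?_
        rw [ContinuousLinearMap.sub_apply, Dmap_zero_apply, Dmap_zero_apply, sub_self]
        simp only [norm_zero]
        positivity
    | succ j ihj =>
      intro hjk1
      have hjk : j + 1 < k + 1 := Nat.succ_lt_succ (Nat.lt_of_succ_le hjk1)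
      have hjle : j ≤ k := Nat.le_of_succ_le hjk1
      have h1j : 1 ≤ j + 1 := Nat.succ_le_succ (Nat.zero_le j)
      have hj1k : j + 1 ≤ k := hjk1
      obtain ⟨C, hC, IH⟩ := ihj hjle
      set C' : ℝ := 1 + θbar * (𝔞₁ * C + 𝔞₀) + (𝔞₁ * C + 𝔞₀ + θbar * 𝔟₀ * C)
        + (2 * 𝔟₀ * C + θbar * 𝔠₀ * C ^ 2 + θbar * 𝔟₀ * C) with hC'def
      have hC' : 0 < C' := by positivity
      have hq1 : (0:ℝ) ≤ 𝔞₁ * C + 𝔞₀ := by positivity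
      have hq2 : (0:ℝ) ≤ θbar * 𝔟₀ * C := by positivity
      have hq3 : (0:ℝ) ≤ θbar * (𝔞₁ * C + 𝔞₀) := by positivity
      have hq4 : (0:ℝ) ≤ 2 * 𝔟₀ * C + θbar * 𝔠₀ * C ^ 2 + θbar * 𝔟₀ * C := by positivity
      have hp2 : θbar * (𝔞₁ * C + 𝔞₀) ≤ C' := by linarith
      have hp3 : (𝔞₁ * C + 𝔞₀) + θbar * 𝔟₀ * C ≤ C' := by linarith
      have hp4 : 2 * 𝔟₀ * C + θbar * 𝔠₀ * C ^ 2 + θbar * 𝔟₀ * C ≤ C' := by linarith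
      refine ⟨C', hC', fun σa θ hθb => ?_⟩
      have hs0 : (0:ℝ) ≤ ‖σa‖ := norm_nonneg _
      have hs1 : (1:ℝ) ≤ ‖σa‖ + 1 := by linarith
      have hsq : (‖σa‖ + 1) ≤ (‖σa‖ + 1) ^ 2 := by nlinarith
      have hFlip : ∀ x x' : (i : Fin (k+1)) → Matrix (Fin (L i)) (Fin (L (i+1))) ℝ,
          ‖x‖ ≤ θbar → ‖x'‖ ≤ θbar →
          ‖dnnPhi L (extendW k L x) σa φ j - dnnPhi L (extendW k L x') σa φ j‖
            ≤ C * (‖σa‖ + 1) * ‖x - x'‖ := by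
        intro x x' hx hx'
        refine Convex.norm_image_sub_le_of_norm_hasFDerivWithin_le
          (f := fun θ' => dnnPhi L (extendW k L θ') σa φ j)
          (f' := fun y => Dmap k L φ σa y j) (s := Metric.closedBall 0 θbar)
          (fun y hy => ((IH σa y (by simpa using hy)).1).hasFDerivWithinAt)
          (fun y hy => (IH σa y (by simpa using hy)).2.2.1)
          (convex_closedBall _ _) (by simpa using hx') (by simpa using hx)
      obtain ⟨hFd, hM, hN, _⟩ := IH σa θ hθb
      have hθi : ‖θ ⟨j+1, hjk⟩‖ ≤ θbar := (norm_le_pi_norm θ _).trans hθb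
      have hφval : ‖φ (j+1) (dnnPhi L (extendW k L θ) σa φ j)‖ ≤ (𝔞₁ * C + 𝔞₀) * (‖σa‖ + 1) := by
        calc ‖φ (j+1) (dnnPhi L (extendW k L θ) σa φ j)‖
            ≤ 𝔞₁ * ‖dnnPhi L (extendW k L θ) σa φ j‖ + 𝔞₀ := hφ (j+1) h1j hj1k _
          _ ≤ 𝔞₁ * (C * (‖σa‖ + 1)) + 𝔞₀ := by nlinarith
          _ ≤ (𝔞₁ * C + 𝔞₀) * (‖σa‖ + 1) := by nlinarith
      refine ⟨hasFDerivAt_dnnPhi_succ k L φ σa θ j hjk (hφdiff (j+1) h1j hj1k) hFd, ?_, ?_, ?_⟩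
      · -- bound on the output
        show ‖matCLM (extendW k L θ (j+1)) (φ (j+1) (dnnPhi L (extendW k L θ) σa φ j))‖ ≤ _
        rw [extendW_lt θ hjk]
        calc ‖matCLM (θ ⟨j+1, hjk⟩) (φ (j+1) (dnnPhi L (extendW k L θ) σa φ j))‖
            ≤ ‖θ ⟨j+1, hjk⟩‖ * ‖φ (j+1) (dnnPhi L (extendW k L θ) σa φ j)‖ :=
              matCLM_apply_norm _ _
          _ ≤ θbar * ((𝔞₁ * C + 𝔞₀) * (‖σa‖ + 1)) :=
              mul_le_mul hθi hφval (norm_nonneg _) hθ.le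
          _ ≤ C' * (‖σa‖ + 1) := dnn_arith1 hp2 hs0
      · -- bound on the derivative
        refine ContinuousLinearMap.opNorm_le_bound _ (by positivity) fun h => ?_
        have hDh : ‖Dmap k L φ σa θ j h‖ ≤ C * (‖σa‖ + 1) * ‖h‖ :=
          (ContinuousLinearMap.le_opNorm _ _).trans
            (mul_le_mul_of_nonneg_right hN (norm_nonneg _))
        have hfDh : ‖(fderiv ℝ (φ (j+1)) (dnnPhi L (extendW k L θ) σa φ j))
              (Dmap k L φ σa θ j h)‖ ≤ 𝔟₀ * (C * (‖σa‖ + 1) * ‖h‖) :=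
          (ContinuousLinearMap.le_opNorm _ _).trans
            (mul_le_mul (hφ' (j+1) h1j hj1k _) hDh (norm_nonneg _) hb0.le)
        have hb1 : ‖matCLM (h ⟨j+1, hjk⟩) (φ (j+1) (dnnPhi L (extendW k L θ) σa φ j))‖
            ≤ (𝔞₁ * C + 𝔞₀) * (‖σa‖ + 1) * ‖h‖ := by
          calc ‖matCLM (h ⟨j+1, hjk⟩) (φ (j+1) (dnnPhi L (extendW k L θ) σa φ j))‖
              ≤ ‖h ⟨j+1, hjk⟩‖ * ‖φ (j+1) (dnnPhi L (extendW k L θ) σa φ j)‖ :=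
                matCLM_apply_norm _ _
            _ ≤ ‖h‖ * ((𝔞₁ * C + 𝔞₀) * (‖σa‖ + 1)) :=
                mul_le_mul (norm_le_pi_norm h _) hφval (norm_nonneg _) (norm_nonneg _)
            _ = (𝔞₁ * C + 𝔞₀) * (‖σa‖ + 1) * ‖h‖ := by ring
        have hb2 : ‖matCLM (θ ⟨j+1, hjk⟩) ((fderiv ℝ (φ (j+1))
              (dnnPhi L (extendW k L θ) σa φ j)) (Dmap k L φ σa θ j h))‖
            ≤ θbar * (𝔟₀ * (C * (‖σa‖ + 1) * ‖h‖)) :=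
          (matCLM_apply_norm _ _).trans (mul_le_mul hθi hfDh (norm_nonneg _) hθ.le)
        rw [Dmap_succ_apply θ h hjk]
        calc ‖matCLM (h ⟨j+1, hjk⟩) (φ (j+1) (dnnPhi L (extendW k L θ) σa φ j))
              + matCLM (θ ⟨j+1, hjk⟩) ((fderiv ℝ (φ (j+1))
                  (dnnPhi L (extendW k L θ) σa φ j)) (Dmap k L φ σa θ j h))‖
            ≤ (𝔞₁ * C + 𝔞₀) * (‖σa‖ + 1) * ‖h‖ + θbar * (𝔟₀ * (C * (‖σa‖ + 1) * ‖h‖)) :=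
              (norm_add_le _ _).trans (add_le_add hb1 hb2)
          _ ≤ C' * (‖σa‖ + 1) * ‖h‖ := dnn_arith2 hp3 hs0 (norm_nonneg h)
      · -- Lipschitz bound for the derivative
        intro θ' hθb'
        obtain ⟨_, hM', hN', _⟩ := IH σa θ' hθb'
        have hθi' : ‖θ' ⟨j+1, hjk⟩‖ ≤ θbar := (norm_le_pi_norm θ' _).trans hθb'
        obtain ⟨_, _, _, hDlip⟩ := IH σa θ hθb
        have hDl := hDlip θ' hθb'
        have hFl := hFlip θ θ' hθb hθb'
        have hφFd : ‖φ (j+1) (dnnPhi L (extendW k L θ) σa φ j)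
              - φ (j+1) (dnnPhi L (extendW k L θ') σa φ j)‖
            ≤ 𝔟₀ * (C * (‖σa‖ + 1) * ‖θ - θ'‖) :=
          (hφlip (j+1) h1j hj1k _ _).trans (mul_le_mul_of_nonneg_left hFl hb0.le)
        have hfd'd : ‖fderiv ℝ (φ (j+1)) (dnnPhi L (extendW k L θ) σa φ j)
              - fderiv ℝ (φ (j+1)) (dnnPhi L (extendW k L θ') σa φ j)‖
            ≤ 𝔠₀ * (C * (‖σa‖ + 1) * ‖θ - θ'‖) :=
          (hφ'lip (j+1) h1j hj1k _ _).trans (mul_le_mul_of_nonneg_left hFl hc0.le)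
        refine ContinuousLinearMap.opNorm_le_bound _ (by positivity) fun h => ?_
        have hDh : ‖Dmap k L φ σa θ j h‖ ≤ C * (‖σa‖ + 1) * ‖h‖ :=
          (ContinuousLinearMap.le_opNorm _ _).trans
            (mul_le_mul_of_nonneg_right hN (norm_nonneg _))
        have hfDh : ‖(fderiv ℝ (φ (j+1)) (dnnPhi L (extendW k L θ) σa φ j))
              (Dmap k L φ σa θ j h)‖ ≤ 𝔟₀ * (C * (‖σa‖ + 1) * ‖h‖) :=
          (ContinuousLinearMap.le_opNorm _ _).trans
            (mul_le_mul (hφ' (j+1) h1j hj1k _) hDh (norm_nonneg _) hb0.le)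
        have hDDh : ‖(Dmap k L φ σa θ j - Dmap k L φ σa θ' j) h‖
            ≤ C * (‖σa‖ + 1) ^ 2 * ‖θ - θ'‖ * ‖h‖ :=
          (ContinuousLinearMap.le_opNorm _ _).trans
            (mul_le_mul_of_nonneg_right hDl (norm_nonneg _))
        rw [ContinuousLinearMap.sub_apply, Dmap_succ_apply θ h hjk, Dmap_succ_apply θ' h hjk]
        have expand :
            matCLM (h ⟨j+1, hjk⟩) (φ (j+1) (dnnPhi L (extendW k L θ) σa φ j))
              + matCLM (θ ⟨j+1, hjk⟩) ((fderiv ℝ (φ (j+1))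
                  (dnnPhi L (extendW k L θ) σa φ j)) (Dmap k L φ σa θ j h))
              - (matCLM (h ⟨j+1, hjk⟩) (φ (j+1) (dnnPhi L (extendW k L θ') σa φ j))
                + matCLM (θ' ⟨j+1, hjk⟩) ((fderiv ℝ (φ (j+1))
                    (dnnPhi L (extendW k L θ') σa φ j)) (Dmap k L φ σa θ' j h)))
            = matCLM (h ⟨j+1, hjk⟩) (φ (j+1) (dnnPhi L (extendW k L θ) σa φ j)
                  - φ (j+1) (dnnPhi L (extendW k L θ') σa φ j))
              + matCLM (θ ⟨j+1, hjk⟩ - θ' ⟨j+1, hjk⟩) ((fderiv ℝ (φ (j+1))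
                  (dnnPhi L (extendW k L θ) σa φ j)) (Dmap k L φ σa θ j h))
              + (matCLM (θ' ⟨j+1, hjk⟩) ((fderiv ℝ (φ (j+1))
                    (dnnPhi L (extendW k L θ) σa φ j)
                  - fderiv ℝ (φ (j+1)) (dnnPhi L (extendW k L θ') σa φ j))
                    (Dmap k L φ σa θ j h))
                + matCLM (θ' ⟨j+1, hjk⟩) ((fderiv ℝ (φ (j+1))
                    (dnnPhi L (extendW k L θ') σa φ j))
                    ((Dmap k L φ σa θ j - Dmap k L φ σa θ' j) h))) := by
          simp only [matCLM_sub, map_sub, ContinuousLinearMap.sub_apply]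
          abel
        rw [expand]
        have hT1 : ‖matCLM (h ⟨j+1, hjk⟩) (φ (j+1) (dnnPhi L (extendW k L θ) σa φ j)
              - φ (j+1) (dnnPhi L (extendW k L θ') σa φ j))‖
            ≤ ‖h‖ * (𝔟₀ * (C * (‖σa‖ + 1) * ‖θ - θ'‖)) :=
          (matCLM_apply_norm _ _).trans
            (mul_le_mul (norm_le_pi_norm h _) hφFd (norm_nonneg _) (norm_nonneg _))
        have hsubn : ‖θ ⟨j+1, hjk⟩ - θ' ⟨j+1, hjk⟩‖ ≤ ‖θ - θ'‖ := by
          have hsub : θ ⟨j+1, hjk⟩ - θ' ⟨j+1, hjk⟩ = (θ - θ') ⟨j+1, hjk⟩ := rfl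
          rw [hsub]; exact norm_le_pi_norm (θ - θ') _
        have hT2 : ‖matCLM (θ ⟨j+1, hjk⟩ - θ' ⟨j+1, hjk⟩) ((fderiv ℝ (φ (j+1))
              (dnnPhi L (extendW k L θ) σa φ j)) (Dmap k L φ σa θ j h))‖
            ≤ ‖θ - θ'‖ * (𝔟₀ * (C * (‖σa‖ + 1) * ‖h‖)) :=
          (matCLM_apply_norm _ _).trans
            (mul_le_mul hsubn hfDh (norm_nonneg _) (norm_nonneg _))
        have hinner3 : ‖(fderiv ℝ (φ (j+1)) (dnnPhi L (extendW k L θ) σa φ j)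
              - fderiv ℝ (φ (j+1)) (dnnPhi L (extendW k L θ') σa φ j))
              (Dmap k L φ σa θ j h)‖
            ≤ (𝔠₀ * (C * (‖σa‖ + 1) * ‖θ - θ'‖)) * (C * (‖σa‖ + 1) * ‖h‖) :=
          (ContinuousLinearMap.le_opNorm _ _).trans
            (mul_le_mul hfd'd hDh (norm_nonneg _) (by positivity))
        have hT3 : ‖matCLM (θ' ⟨j+1, hjk⟩) ((fderiv ℝ (φ (j+1))
              (dnnPhi L (extendW k L θ) σa φ j)
            - fderiv ℝ (φ (j+1)) (dnnPhi L (extendW k L θ') σa φ j))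
              (Dmap k L φ σa θ j h))‖
            ≤ θbar * ((𝔠₀ * (C * (‖σa‖ + 1) * ‖θ - θ'‖)) * (C * (‖σa‖ + 1) * ‖h‖)) :=
          (matCLM_apply_norm _ _).trans
            (mul_le_mul hθi' hinner3 (norm_nonneg _) hθ.le)
        have hinner4 : ‖(fderiv ℝ (φ (j+1)) (dnnPhi L (extendW k L θ') σa φ j))
              ((Dmap k L φ σa θ j - Dmap k L φ σa θ' j) h)‖
            ≤ 𝔟₀ * (C * (‖σa‖ + 1) ^ 2 * ‖θ - θ'‖ * ‖h‖) :=
          (ContinuousLinearMap.le_opNorm _ _).trans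
            (mul_le_mul (hφ' (j+1) h1j hj1k _) hDDh (norm_nonneg _) hb0.le)
        have hT4 : ‖matCLM (θ' ⟨j+1, hjk⟩) ((fderiv ℝ (φ (j+1))
              (dnnPhi L (extendW k L θ') σa φ j))
              ((Dmap k L φ σa θ j - Dmap k L φ σa θ' j) h))‖
            ≤ θbar * (𝔟₀ * (C * (‖σa‖ + 1) ^ 2 * ‖θ - θ'‖ * ‖h‖)) :=
          (matCLM_apply_norm _ _).trans
            (mul_le_mul hθi' hinner4 (norm_nonneg _) hθ.le)
        have hfinal := (norm_add_le _ _).trans (add_le_add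
          ((norm_add_le _ _).trans (add_le_add hT1 hT2))
          ((norm_add_le _ _).trans (add_le_add hT3 hT4)))
        refine hfinal.trans ?_
        exact dnn_arith3 hb0.le hc0.le hθ.le hC.le hp4 hs0 (norm_nonneg _) (norm_nonneg _)
  -- wrap up
  obtain ⟨C, hCpos, hkey⟩ := key k le_rfl
  refine ⟨C, 4 * C, 4 * C, hCpos, by positivity, by positivity, ?_⟩
  intro σ θstar hθs θhat hθh
  set σa := augInput (L 0) m σ with hσa
  have hσb : ‖σa‖ ≤ ‖σ‖ + 1 := augInput_norm_le (L 0) m hL0 σ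
  have hθsb := hΘbdd θstar hθs
  have hθhb := hΘbdd θhat hθh
  have hseg : segment ℝ θhat θstar ⊆ Metric.closedBall 0 θbar := by
    have h1 : θhat ∈ Metric.closedBall (0 : (i : Fin (k+1)) →
        Matrix (Fin (L i)) (Fin (L (i+1))) ℝ) θbar := by simpa using hθhb
    have h2 : θstar ∈ Metric.closedBall (0 : (i : Fin (k+1)) →
        Matrix (Fin (L i)) (Fin (L (i+1))) ℝ) θbar := by simpa using hθsb
    exact (convex_closedBall _ _).segment_subset h1 h2
  have hsegnorm : ∀ x ∈ segment ℝ θhat θstar, ‖x - θhat‖ ≤ ‖θstar - θhat‖ := by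
    intro x hx
    obtain ⟨a, b, ha, hb, hab, rfl⟩ := hx
    have heq : a • θhat + b • θstar - θhat = b • (θstar - θhat) := by
      rw [show a = 1 - b by linarith, sub_smul, one_smul, smul_sub]
      abel
    rw [heq, norm_smul]
    simp only [Real.norm_eq_abs, abs_of_nonneg hb]
    nlinarith [norm_nonneg (θstar - θhat)]
  have hfd : fderiv ℝ (fun Wt => dnnPhi L (extendW k L Wt) σa φ k) θhat
      = Dmap k L φ σa θhat k := ((hkey σa θhat hθhb).1).fderiv
  have hmain : ‖dnnPhi L (extendW k L θstar) σa φ k - dnnPhi L (extendW k L θhat) σa φ k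
      - (Dmap k L φ σa θhat k) (θstar - θhat)‖
      ≤ C * (‖σa‖ + 1) ^ 2 * ‖θstar - θhat‖ * ‖θstar - θhat‖ := by
    have hg : ∀ x ∈ segment ℝ θhat θstar,
        HasFDerivWithinAt (fun θ' => dnnPhi L (extendW k L θ') σa φ k
            - (Dmap k L φ σa θhat k) θ')
          (Dmap k L φ σa x k - Dmap k L φ σa θhat k) (segment ℝ θhat θstar) x := by
      intro x hx
      have hx' : ‖x‖ ≤ θbar := by simpa using hseg hx
      exact (((hkey σa x hx').1).sub ((Dmap k L φ σa θhat k).hasFDerivAt)).hasFDerivWithinAt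
    have hbound : ∀ x ∈ segment ℝ θhat θstar,
        ‖Dmap k L φ σa x k - Dmap k L φ σa θhat k‖
          ≤ C * (‖σa‖ + 1) ^ 2 * ‖θstar - θhat‖ := by
      intro x hx
      have hx' : ‖x‖ ≤ θbar := by simpa using hseg hx
      calc ‖Dmap k L φ σa x k - Dmap k L φ σa θhat k‖
          ≤ C * (‖σa‖ + 1) ^ 2 * ‖x - θhat‖ := (hkey σa x hx').2.2.2 θhat hθhb
        _ ≤ C * (‖σa‖ + 1) ^ 2 * ‖θstar - θhat‖ :=
            mul_le_mul_of_nonneg_left (hsegnorm x hx) (by positivity)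
    have hmv := Convex.norm_image_sub_le_of_norm_hasFDerivWithin_le hg hbound
      (convex_segment _ _) (left_mem_segment ℝ θhat θstar)
      (right_mem_segment ℝ θhat θstar)
    have hrw : dnnPhi L (extendW k L θstar) σa φ k - dnnPhi L (extendW k L θhat) σa φ k
        - (Dmap k L φ σa θhat k) (θstar - θhat)
        = (dnnPhi L (extendW k L θstar) σa φ k - (Dmap k L φ σa θhat k) θstar)
          - (dnnPhi L (extendW k L θhat) σa φ k - (Dmap k L φ σa θhat k) θhat) := by
      rw [map_sub]; abel
    rw [hrw]
    exact hmv
  rw [hfd]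
  refine hmain.trans ?_
  exact dnn_arith4 hCpos.le (norm_nonneg σa) (norm_nonneg σ) (norm_nonneg _) hσb
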